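/- Fix a band index set b = 1,…,B. For each b, the function g(ρ | ρ̃) = Σ_{b=1}^B [ f_b(ρ̃_b) + f_b'(ρ̃_b)(ρ_b − ρ̃_b) + (L_b/2)(ρ_b − ρ̃_b)² ] majorizes Σ_{b=1}^B f_b(ρ_b) at the point ρ̃ ∈ ℝ^B; that is, g(ρ̃ | ρ̃) = Σ_{b=1}^B f_b(ρ̃_b) and g(ρ | ρ̃) ≥ Σ_{b=1}^B f_b(ρ_b) for all ρ ∈ ℝ^B, where L_b = a_b ( a_b κ_b + √(n_b) · ‖W_b μ_b‖₂ ), κ_b = Σ_{i=1}^{n_b} w_{bi}, and ‖W_b μ_b‖₂ = sqrt( Σ_{i=1}^{n_b} (w_{bi} μ_{bi})² ). -/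

import Mathlib

open Finset in
private lemma band_major {N : ℕ} (c w μ : Fin N → ℝ) (a : ℝ) (ha : 0 ≤ a)
    (hw : ∀ i, 0 < w i)
    (f : ℝ → ℝ)
    (hf : ∀ ρ, f ρ = (1 / 2) * ∑ i, w i * (a * Real.sin (c i + ρ) - μ i) ^ 2)
    (L : ℝ)
    (hL : L = a * (a * (∑ i, w i) +
      Real.sqrt N * Real.sqrt (∑ i, (w i * μ i) ^ 2)))
    (x y : ℝ) :
    f y ≤ f x + deriv f x * (y - x) + L / 2 * (y - x) ^ 2 := by
  have hfe : f = fun ρ => (1 / 2) * ∑ i, w i * (a * Real.sin (c i + ρ) - μ i) ^ 2 :=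
    funext hf
  -- basic derivative facts
  have hsin : ∀ (d ρ : ℝ), HasDerivAt (fun ρ => Real.sin (d + ρ)) (Real.cos (d + ρ)) ρ := by
    intro d ρ
    simpa [Function.comp_def] using (Real.hasDerivAt_sin (d + ρ)).comp ρ ((hasDerivAt_id ρ).const_add d)
  have hcos : ∀ (d ρ : ℝ), HasDerivAt (fun ρ => Real.cos (d + ρ)) (-Real.sin (d + ρ)) ρ := by
    intro d ρ
    simpa [Function.comp_def] using (Real.hasDerivAt_cos (d + ρ)).comp ρ ((hasDerivAt_id ρ).const_add d)
  set F1 : ℝ → ℝ := fun ρ => ∑ i, w i *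
    ((a * Real.sin (c i + ρ) - μ i) * (a * Real.cos (c i + ρ))) with hF1
  set F2 : ℝ → ℝ := fun ρ => ∑ i, w i *
    ((a * Real.cos (c i + ρ)) ^ 2 -
      (a * Real.sin (c i + ρ) - μ i) * (a * Real.sin (c i + ρ))) with hF2
  have hdf : ∀ ρ, HasDerivAt f (F1 ρ) ρ := by
    intro ρ
    rw [hfe]
    have h : HasDerivAt
        (fun ρ => ∑ i, w i * (a * Real.sin (c i + ρ) - μ i) ^ 2)
        (∑ i, w i * ((2 : ℕ) * (a * Real.sin (c i + ρ) - μ i) ^ 1 * (a * Real.cos (c i + ρ)))) ρ :=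
      HasDerivAt.fun_sum fun i _ =>
        ((((hsin (c i) ρ).const_mul a).sub_const (μ i)).pow 2).const_mul (w i)
    have h2 := h.const_mul (1 / 2 : ℝ)
    refine h2.congr_deriv ?_
    rw [hF1, Finset.mul_sum]
    refine Finset.sum_congr rfl fun i _ => by push_cast; ring
  have hdF1 : ∀ ρ, HasDerivAt F1 (F2 ρ) ρ := by
    intro ρ
    have h : HasDerivAt
        (fun ρ => ∑ i, w i *
          ((a * Real.sin (c i + ρ) - μ i) * (a * Real.cos (c i + ρ))))
        (∑ i, w i *
          (Real.cos (c i + ρ) * a * (a * Real.cos (c i + ρ)) +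
            (a * Real.sin (c i + ρ) - μ i) * (a * -Real.sin (c i + ρ)))) ρ := by
      refine HasDerivAt.fun_sum fun i _ => ?_
      have hu : HasDerivAt (fun ρ => a * Real.sin (c i + ρ) - μ i)
          (Real.cos (c i + ρ) * a) ρ := by
        simpa [mul_comm] using ((hsin (c i) ρ).const_mul a).sub_const (μ i)
      have hv : HasDerivAt (fun ρ => a * Real.cos (c i + ρ))
          (a * -Real.sin (c i + ρ)) ρ := (hcos (c i) ρ).const_mul a
      exact (hu.mul hv).const_mul (w i)
    convert h using 1
    rw [hF2]
    exact Finset.sum_congr rfl fun i _ => by ring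
  -- bound on the second derivative
  have hF2_le : ∀ ρ, F2 ρ ≤ L := by
    intro ρ
    have step1 : F2 ρ ≤ ∑ i, w i * (a ^ 2 + a * |μ i|) := by
      refine Finset.sum_le_sum fun i _ => ?_
      refine mul_le_mul_of_nonneg_left ?_ (hw i).le
      set s := c i + ρ
      have hms : μ i * Real.sin s ≤ |μ i| := by
        refine (le_abs_self _).trans ?_
        rw [abs_mul]
        exact mul_le_of_le_one_right (abs_nonneg _) (Real.abs_sin_le_one s)
      nlinarith [Real.cos_sq_le_one s, sq_nonneg (Real.sin s), sq_nonneg a,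
        mul_le_mul_of_nonneg_left hms ha,
        mul_le_mul_of_nonneg_left (Real.cos_sq_le_one s) (sq_nonneg a),
        mul_nonneg (sq_nonneg a) (sq_nonneg (Real.sin s))]
    have hCS : (∑ i, w i * |μ i|) ≤
        Real.sqrt N * Real.sqrt (∑ i, (w i * μ i) ^ 2) := by
      have h := Real.sum_mul_le_sqrt_mul_sqrt (Finset.univ : Finset (Fin N))
        (fun _ => (1 : ℝ)) (fun i => w i * |μ i|)
      have h1 : (∑ _i : Fin N, (1 : ℝ) ^ 2) = (N : ℝ) := by simp
      have h2 : (∑ i : Fin N, (w i * |μ i|) ^ 2) = ∑ i : Fin N, (w i * μ i) ^ 2 := by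
        refine Finset.sum_congr rfl fun i _ => by rw [mul_pow, mul_pow, sq_abs]
      simpa [h1, h2] using h
    have step2 : (∑ i, w i * (a ^ 2 + a * |μ i|)) =
        a ^ 2 * (∑ i, w i) + a * ∑ i, w i * |μ i| := by
      rw [Finset.mul_sum, Finset.mul_sum, ← Finset.sum_add_distrib]
      exact Finset.sum_congr rfl fun i _ => by ring
    have := mul_le_mul_of_nonneg_left hCS ha
    nlinarith [step1, step2]
  -- convexity of h := L/2 ρ² − f
  set h : ℝ → ℝ := fun ρ => L / 2 * ρ ^ 2 - f ρ with hh
  have hdh : ∀ ρ, HasDerivAt h (L * ρ - F1 ρ) ρ := by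
    intro ρ
    have h1 : HasDerivAt (fun ρ : ℝ => L / 2 * ρ ^ 2) (L * ρ) ρ := by
      have := (hasDerivAt_pow 2 ρ).const_mul (L / 2 : ℝ)
      refine this.congr_deriv ?_
      push_cast; ring
    exact h1.sub (hdf ρ)
  have hdh2 : ∀ ρ, HasDerivAt (fun ρ => L * ρ - F1 ρ) (L - F2 ρ) ρ := by
    intro ρ
    have h1 : HasDerivAt (fun ρ : ℝ => L * ρ) L ρ := by
      simpa using (hasDerivAt_id ρ).const_mul L
    exact h1.sub (hdF1 ρ)
  have hderiv_h : deriv h = fun ρ => L * ρ - F1 ρ := funext fun ρ => (hdh ρ).deriv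
  have hconv : ConvexOn ℝ Set.univ h := by
    refine convexOn_univ_of_deriv2_nonneg (fun ρ => (hdh ρ).differentiableAt) ?_ ?_
    · rw [hderiv_h]; exact fun ρ => (hdh2 ρ).differentiableAt
    · intro ρ
      have : deriv (deriv h) ρ = L - F2 ρ := by
        rw [hderiv_h]; exact (hdh2 ρ).deriv
      simp only [Function.iterate_succ, Function.iterate_zero, Function.comp_apply, id_eq]
      rw [this]
      linarith [hF2_le ρ]
  -- tangent-line inequality at x
  have key : h x + (L * x - F1 x) * (y - x) ≤ h y := by
    rcases lt_trichotomy x y with hxy | hxy | hxy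
    · have hs := hconv.le_slope_of_hasDerivAt (Set.mem_univ x) (Set.mem_univ y) hxy (hdh x)
      rw [slope_def_field] at hs
      have hpos : 0 < y - x := sub_pos.2 hxy
      rw [le_div_iff₀ hpos] at hs
      linarith
    · subst hxy; simp
    · have hs := hconv.slope_le_of_hasDerivAt (Set.mem_univ y) (Set.mem_univ x) hxy (hdh x)
      rw [slope_def_field] at hs
      have hpos : 0 < x - y := sub_pos.2 hxy
      rw [div_le_iff₀ hpos] at hs
      linarith
  have hdfx : deriv f x = F1 x := (hdf x).deriv
  rw [hdfx]
  simp only [hh] at key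
  nlinarith [key]

/-- Proposition 4.2 (majorization in the phase update): the convex quadratic
`g(ρ | ρ₀) = Σ_b [ f_b(ρ₀_b) + f_b'(ρ₀_b)(ρ_b − ρ₀_b) + (L_b/2)(ρ_b − ρ₀_b)² ]`
majorizes `Σ_b f_b(ρ_b)` at the anchor point `ρ₀`. -/
theorem mm_majorization {B : ℕ} (n : Fin B → ℕ) (ω : ℝ)
    (t w μ : (b : Fin B) → Fin (n b) → ℝ)
    (a : Fin B → ℝ)
    (hw : ∀ b i, 0 < w b i) (ha : ∀ b, 0 ≤ a b)
    (f : Fin B → ℝ → ℝ)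
    (hf : ∀ b ρ, f b ρ =
      (1 / 2) * ∑ i, w b i * (a b * Real.sin (ω * t b i + ρ) - μ b i) ^ 2)
    (L : Fin B → ℝ)
    (hL : ∀ b, L b = a b * (a b * (∑ i, w b i) +
      Real.sqrt (n b) * Real.sqrt (∑ i, (w b i * μ b i) ^ 2)))
    (ρ₀ : Fin B → ℝ)
    (g : (Fin B → ℝ) → ℝ)
    (hg : ∀ ρ, g ρ = ∑ b, (f b (ρ₀ b) + deriv (f b) (ρ₀ b) * (ρ b - ρ₀ b)
        + L b / 2 * (ρ b - ρ₀ b) ^ 2)) :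
    g ρ₀ = ∑ b, f b (ρ₀ b) ∧ ∀ ρ : Fin B → ℝ, ∑ b, f b (ρ b) ≤ g ρ := by
  constructor
  · rw [hg]; simp
  · intro ρ
    rw [hg]
    refine Finset.sum_le_sum fun b _ => ?_
    exact band_major (fun i => ω * t b i) (w b) (μ b) (a b) (ha b) (hw b)
      (f b) (hf b) (L b) (hL b) (ρ₀ b) (ρ b)
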